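/- Let m ≥ 1, let U ⊆ ℝ^m be a disjoint union of finitely many standard balls, and let A be a finite set. Let P_{<U} be the poset, ordered by inclusion, of open proper subsets U₀ ⊊ U that are disjoint unions of finitely many standard balls. Then the canonical map colim_{U₀ ∈ P_{<U}} sEmb(A × D^m, U₀) → sEmb(A × D^m, U), taken in the category of sets, is injective, and its image is exactly the set of standard embeddings of A × D^m into U whose image is not all of U (the non-surjective standard embeddings). -/

import Mathlib

/-!
STATEMENT 16: Let U ⊆ ℝ^m be a disjoint union of finitely many standard balls and A a
finite set. The canonical map `colim_{U₀ ∈ P_{<U}} sEmb(A × D^m, U₀) → sEmb(A × D^m, U)`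
(colimit over the poset of proper open subsets of U that are disjoint unions of finitely
many standard balls) is injective, with image exactly the non-surjective standard
embeddings of A × D^m into U.
-/

open CategoryTheory CategoryTheory.Limits

noncomputable section

abbrev Euc (m : ℕ) := EuclideanSpace ℝ (Fin m)

def aff {m : ℕ} (p : ℝ × Euc m) (x : Euc m) : Euc m := p.1 • x + p.2

def unitBall (m : ℕ) : Set (Euc m) := Metric.ball 0 1

def realizeBalls {m : ℕ} {A : Type} (u : A → ℝ × Euc m) :
    (A × (unitBall m)) → Euc m :=
  fun ax => aff (u ax.1) ax.2.1

def IsStdEmbBalls {m : ℕ} {A : Type} (X : Set (Euc m)) (u : A → ℝ × Euc m) : Prop :=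
  (∀ a, 0 < (u a).1) ∧ Function.Injective (realizeBalls u) ∧
    Set.range (realizeBalls u) ⊆ X

/-- `U` is a disjoint union of finitely many standard balls. -/
def IsFinBallUnion {m : ℕ} (U : Set (Euc m)) : Prop :=
  ∃ (ι : Type) (_ : Fintype ι) (p : ι → ℝ × Euc m), (∀ i, 0 < (p i).1) ∧
    (∀ i i', i ≠ i' →
      Disjoint (Metric.ball (p i).2 (p i).1) (Metric.ball (p i').2 (p i').1)) ∧
    U = ⋃ i, Metric.ball (p i).2 (p i).1

/-- The poset of proper open subsets `U₀ ⊊ U` that are disjoint unions of finitely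
many standard balls, ordered by inclusion. -/
def ProperBallUnionPoset (m : ℕ) (U : Set (Euc m)) : Type :=
  {U₀ : Set (Euc m) // IsFinBallUnion U₀ ∧ U₀ ⊂ U}

instance (m : ℕ) (U : Set (Euc m)) : PartialOrder (ProperBallUnionPoset m U) :=
  inferInstanceAs (PartialOrder {U₀ : Set (Euc m) // IsFinBallUnion U₀ ∧ U₀ ⊂ U})

instance (m : ℕ) (U : Set (Euc m)) : Category (ProperBallUnionPoset m U) :=
  Preorder.smallCategory _

/-- The functor `U₀ ↦ sEmb(A × D^m, U₀)`. -/
def embDiagramLt (m : ℕ) (U : Set (Euc m)) (A : Type) [Fintype A] :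
    ProperBallUnionPoset m U ⥤ Type where
  obj U₀ := {u : A → ℝ × Euc m // IsStdEmbBalls U₀.1 u}
  map {U₀ V₀} h := TypeCat.ofHom fun u => ⟨u.1, by
    obtain ⟨h1, h2, h3⟩ := u.2
    exact ⟨h1, h2, h3.trans (leOfHom h)⟩⟩
  map_id := by intros; rfl
  map_comp := by intros; rfl

/-- The canonical cocone with apex `sEmb(A × D^m, U)`. -/
def embCoconeLt (m : ℕ) (U : Set (Euc m)) (A : Type) [Fintype A] :
    Cocone (embDiagramLt m U A) where
  pt := {u : A → ℝ × Euc m // IsStdEmbBalls U u}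
  ι :=
    { app := fun U₀ => TypeCat.ofHom fun u => ⟨u.1, by
        obtain ⟨h1, h2, h3⟩ := u.2
        exact ⟨h1, h2, h3.trans U₀.2.2.subset⟩⟩
      naturality := by intros; rfl }

lemma aff_mem_ball {m : ℕ} {c : ℝ} (hc : 0 < c) (v x : Euc m) :
    c • x + v ∈ Metric.ball v c ↔ x ∈ unitBall m := by
  simp only [unitBall, Metric.mem_ball, dist_eq_norm, add_sub_cancel_right, sub_zero,
    norm_smul, Real.norm_eq_abs, abs_of_pos hc]
  exact mul_lt_iff_lt_one_right hc

lemma exists_preimage {m : ℕ} {A : Type} (u : A → ℝ × Euc m) (hu : ∀ a, 0 < (u a).1)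
    {a : A} {z : Euc m} (hz : z ∈ Metric.ball (u a).2 (u a).1) :
    ∃ y : unitBall m, realizeBalls u (a, y) = z := by
  have hc := (hu a).ne'
  have hx' : (u a).1 • (((u a).1)⁻¹ • (z - (u a).2)) + (u a).2 = z := by
    rw [smul_inv_smul₀ hc]; abel
  have hmem : ((u a).1)⁻¹ • (z - (u a).2) ∈ unitBall m := by
    rw [← aff_mem_ball (hu a) (u a).2, hx']; exact hz
  exact ⟨⟨_, hmem⟩, hx'⟩

lemma range_realize {m : ℕ} {A : Type} (u : A → ℝ × Euc m) (hu : ∀ a, 0 < (u a).1) :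
    Set.range (realizeBalls u) = ⋃ a, Metric.ball (u a).2 (u a).1 := by
  ext x
  simp only [Set.mem_range, Set.mem_iUnion]
  constructor
  · rintro ⟨⟨a, y, hy⟩, rfl⟩
    exact ⟨a, (aff_mem_ball (hu a) _ _).2 hy⟩
  · rintro ⟨a, hx⟩
    obtain ⟨y, hy⟩ := exists_preimage u hu hx
    exact ⟨(a, y), hy⟩

lemma finBallUnion_range {m : ℕ} {A : Type} [Fintype A] (u : A → ℝ × Euc m)
    (h1 : ∀ a, 0 < (u a).1) (h2 : Function.Injective (realizeBalls u)) :
    IsFinBallUnion (Set.range (realizeBalls u)) := by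
  refine ⟨A, inferInstance, u, h1, ?_, range_realize u h1⟩
  intro a a' haa'
  rw [Set.disjoint_left]
  intro z hz hz'
  obtain ⟨y, hy⟩ := exists_preimage u h1 hz
  obtain ⟨y', hy'⟩ := exists_preimage u h1 hz'
  exact haa' (congrArg Prod.fst (h2 (hy.trans hy'.symm)))

theorem stmt_16 (m : ℕ) (hm : 1 ≤ m) (U : Set (Euc m)) (hU : IsFinBallUnion U)
    (A : Type) [Fintype A] :
    Function.Injective (colimit.desc (embDiagramLt m U A) (embCoconeLt m U A)) ∧
    Set.range (colimit.desc (embDiagramLt m U A) (embCoconeLt m U A)) =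
      {u : {u : A → ℝ × Euc m // IsStdEmbBalls U u} |
        Set.range (realizeBalls u.1) ≠ U} := by
  set F := embDiagramLt m U A
  set c := embCoconeLt m U A
  constructor
  · intro x y hxy
    obtain ⟨U₀, a, rfl⟩ := Types.jointly_surjective' x
    obtain ⟨V₀, b, rfl⟩ := Types.jointly_surjective' y
    rw [Types.Colimit.ι_desc_apply, Types.Colimit.ι_desc_apply] at hxy
    have hab : a.1 = b.1 := congrArg Subtype.val hxy
    have hWU : Set.range (realizeBalls a.1) ⊂ U :=
      lt_of_le_of_lt a.2.2.2 U₀.2.2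
    let W : ProperBallUnionPoset m U :=
      ⟨Set.range (realizeBalls a.1), finBallUnion_range a.1 a.2.1 a.2.2.1, hWU⟩
    let z : F.obj W := ⟨a.1, a.2.1, a.2.2.1, subset_rfl⟩
    have hle : W.1 ⊆ V₀.1 := by
      show Set.range (realizeBalls a.1) ⊆ V₀.1
      rw [hab]; exact b.2.2.2
    have h1 : colimit.ι F W z = colimit.ι F U₀ a :=
      Types.colimit_sound (homOfLE a.2.2.2) (Subtype.ext rfl)
    have h2 : colimit.ι F W z = colimit.ι F V₀ b :=
      Types.colimit_sound (homOfLE hle) (Subtype.ext hab)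
    exact h1.symm.trans h2
  · ext u
    constructor
    · rintro ⟨x, rfl⟩
      obtain ⟨U₀, a, rfl⟩ := Types.jointly_surjective' x
      rw [Types.Colimit.ι_desc_apply]
      have : Set.range (realizeBalls a.1) ⊂ U := lt_of_le_of_lt a.2.2.2 U₀.2.2
      exact this.ne
    · intro hu
      have hW : Set.range (realizeBalls u.1) ⊂ U := lt_of_le_of_ne u.2.2.2 hu
      refine ⟨colimit.ι F ⟨Set.range (realizeBalls u.1),
        finBallUnion_range u.1 u.2.1 u.2.2.1, hW⟩ ⟨u.1, u.2.1, u.2.2.1, subset_rfl⟩, ?_⟩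
      exact (Types.Colimit.ι_desc_apply _ _ _ _).trans (Subtype.ext rfl)

end
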